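/- arXiv:1810.08235 — 2 statements merged into one kernel-verified Lean document; each statement's English description precedes it below -/
import Mathlib

section
/- For integers m, n, p, q ≥ 1, the convolution sequence (r_i)_{i≥1} is nonincreasing beyond index p+q+1+⌊(m+n)/2⌋; that is, r_{i+1} ≤ r_i for every i ≥ p+q+1+⌊(m+n)/2⌋. -/
/-- The sequence of `p` ones followed by the binomial coefficients
`choose m 0, …, choose m m` and then zeros (indexed from 1; the value at 0 is 0). -/
def broomSeq (m p : ℕ) : ℕ → ℕ := fun i =>
  if 1 ≤ i ∧ i ≤ p then 1
  else if p + 1 ≤ i ∧ i ≤ p + m + 1 then Nat.choose m (i - p - 1)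
  else 0

/-- The convolution `r_i = ∑_{j=1}^{i} s_j * t_{i+1-j}` of the two broom sequences. -/
def convSeq (m n p q : ℕ) : ℕ → ℕ := fun i =>
  ∑ j ∈ Finset.Icc 1 i, broomSeq m p j * broomSeq n q (i + 1 - j)

/-- A sequence (indexed from 1) is unimodal if for some `k ≥ 1` it is
nondecreasing up to `k` and nonincreasing from `k` on. -/
def Unimodal (a : ℕ → ℕ) : Prop :=
  ∃ k : ℕ, 1 ≤ k ∧ (∀ i, 1 ≤ i → i < k → a i ≤ a (i + 1)) ∧ (∀ i, k ≤ i → a (i + 1) ≤ a i)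

lemma broom_hi (m p a : ℕ) (h : p + 1 ≤ a) :
    broomSeq m p a = Nat.choose m (a - p - 1) := by
  unfold broomSeq
  rw [if_neg (by omega)]
  by_cases h1 : a ≤ p + m + 1
  · rw [if_pos ⟨h, h1⟩]
  · rw [if_neg (by omega)]
    exact (Nat.choose_eq_zero_of_lt (by omega)).symm

lemma broom_one (m p a : ℕ) (h1 : 1 ≤ a) (h2 : a ≤ p) :
    broomSeq m p a = 1 := by
  unfold broomSeq
  rw [if_pos ⟨h1, h2⟩]

lemma choose_succ_le' (n j : ℕ) (h : n ≤ 2 * j + 1) :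
    Nat.choose n (j + 1) ≤ Nat.choose n j := by
  have h1 := Nat.choose_succ_right_eq n j
  have h2 : Nat.choose n (j + 1) * (j + 1) ≤ Nat.choose n j * (j + 1) := by
    rw [h1]
    exact Nat.mul_le_mul_left _ (by omega)
  exact Nat.le_of_mul_le_mul_right h2 (by omega)

lemma convSeq_eq (m n p q i : ℕ) (hp : 1 ≤ p) (hq : 1 ≤ q) (hi : p + q + 2 ≤ i) :
    convSeq m n p q i =
      (∑ j ∈ Finset.Icc 1 p, Nat.choose n (i - q - j)) +
      ((∑ j ∈ Finset.Icc 1 q, Nat.choose m (i - p - j)) +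
       Nat.choose (m + n) (i - p - q - 1)) := by
  unfold convSeq
  have hsplit1 : Finset.Icc 1 i = Finset.Icc 1 p ∪ Finset.Icc (p + 1) i := by
    ext x; simp only [Finset.mem_union, Finset.mem_Icc]; omega
  have hdisj1 : Disjoint (Finset.Icc 1 p) (Finset.Icc (p + 1) i) := by
    rw [Finset.disjoint_left]; intro x hx hx'
    simp only [Finset.mem_Icc] at hx hx'; omega
  rw [hsplit1, Finset.sum_union hdisj1]
  have hsplit2 : Finset.Icc (p + 1) i = Finset.Icc (p + 1) (i - q) ∪ Finset.Icc (i - q + 1) i := by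
    ext x; simp only [Finset.mem_union, Finset.mem_Icc]; omega
  have hdisj2 : Disjoint (Finset.Icc (p + 1) (i - q)) (Finset.Icc (i - q + 1) i) := by
    rw [Finset.disjoint_left]; intro x hx hx'
    simp only [Finset.mem_Icc] at hx hx'; omega
  rw [hsplit2, Finset.sum_union hdisj2]
  have e1 : ∑ j ∈ Finset.Icc 1 p, broomSeq m p j * broomSeq n q (i + 1 - j)
      = ∑ j ∈ Finset.Icc 1 p, Nat.choose n (i - q - j) := by
    apply Finset.sum_congr rfl
    intro j hj
    simp only [Finset.mem_Icc] at hj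
    rw [broom_one m p j hj.1 hj.2, one_mul, broom_hi n q (i + 1 - j) (by omega)]
    congr 1; omega
  have e2 : ∑ j ∈ Finset.Icc (p + 1) (i - q), broomSeq m p j * broomSeq n q (i + 1 - j)
      = Nat.choose (m + n) (i - p - q - 1) := by
    rw [Nat.add_choose_eq]
    apply Finset.sum_nbij' (fun j => (j - p - 1, i - q - j)) (fun ab => p + 1 + ab.1)
    · intro a ha
      simp only [Finset.mem_Icc] at ha
      simp only [Finset.HasAntidiagonal.mem_antidiagonal]
      omega
    · intro ab hab
      simp only [Finset.HasAntidiagonal.mem_antidiagonal] at hab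
      simp only [Finset.mem_Icc]
      omega
    · intro a ha
      simp only [Finset.mem_Icc] at ha
      omega
    · intro ab hab
      obtain ⟨a, b⟩ := ab
      simp only [Finset.HasAntidiagonal.mem_antidiagonal] at hab
      simp only [Prod.mk.injEq]
      constructor <;> omega
    · intro a ha
      simp only [Finset.mem_Icc] at ha
      rw [broom_hi m p a (by omega), broom_hi n q (i + 1 - a) (by omega)]
      have hx : i + 1 - a - q - 1 = i - q - a := by omega
      rw [hx]
  have e3 : ∑ j ∈ Finset.Icc (i - q + 1) i, broomSeq m p j * broomSeq n q (i + 1 - j)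
      = ∑ j ∈ Finset.Icc 1 q, Nat.choose m (i - p - j) := by
    apply Finset.sum_nbij' (fun j => i + 1 - j) (fun j => i + 1 - j)
    · intro a ha
      simp only [Finset.mem_Icc] at ha ⊢; omega
    · intro a ha
      simp only [Finset.mem_Icc] at ha ⊢; omega
    · intro a ha
      simp only [Finset.mem_Icc] at ha; omega
    · intro a ha
      simp only [Finset.mem_Icc] at ha; omega
    · intro a ha
      simp only [Finset.mem_Icc] at ha
      rw [broom_hi m p a (by omega), broom_one n q (i + 1 - a) (by omega) (by omega), mul_one]
      congr 1; omega
  rw [e1, e2, e3]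
  ring

theorem convSeq_decreasing_tail (m n p q : ℕ)
    (hm : 1 ≤ m) (hn : 1 ≤ n) (hp : 1 ≤ p) (hq : 1 ≤ q) :
    ∀ i, p + q + 1 + (m + n) / 2 ≤ i → convSeq m n p q (i + 1) ≤ convSeq m n p q i := by
  intro i hi
  have hd : 1 ≤ (m + n) / 2 := by omega
  have hmn : m + n ≤ 2 * ((m + n) / 2) + 1 := by omega
  rw [convSeq_eq m n p q i hp hq (by omega),
      convSeq_eq m n p q (i + 1) hp hq (by omega)]
  gcongr with j hj j hj
  · simp only [Finset.mem_Icc] at hj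
    have h1 : i + 1 - q - j = (i - q - j) + 1 := by omega
    rw [h1]
    exact choose_succ_le' n _ (by omega)
  · simp only [Finset.mem_Icc] at hj
    have h1 : i + 1 - p - j = (i - p - j) + 1 := by omega
    rw [h1]
    exact choose_succ_le' m _ (by omega)
  · have h1 : i + 1 - p - q - 1 = (i - p - q - 1) + 1 := by omega
    rw [h1]
    exact choose_succ_le' (m + n) _ (by omega)
end

section
/- For integers m, p, q ≥ 1, if n = 1 then the convolution sequence (r_i)_{i≥1} is unimodal. -/
private lemma broom_zero (m p : ℕ) : broomSeq m p 0 = 0 := by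
  simp [broomSeq]

private lemma broom_ones {m p i : ℕ} (h1 : 1 ≤ i) (h2 : i ≤ p) : broomSeq m p i = 1 := by
  simp [broomSeq, h1, h2]

private lemma broom_choose {m p i : ℕ} (h1 : p + 1 ≤ i) (h2 : i ≤ p + m + 1) :
    broomSeq m p i = Nat.choose m (i - p - 1) := by
  unfold broomSeq
  rw [if_neg (by omega), if_pos ⟨h1, h2⟩]

private lemma broom_big {m p i : ℕ} (h : p + m + 1 < i) : broomSeq m p i = 0 := by
  unfold broomSeq
  rw [if_neg (by omega), if_neg (by omega)]

private lemma broom_one_eq (q i : ℕ) :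
    broomSeq 1 q i = if 1 ≤ i ∧ i ≤ q + 2 then 1 else 0 := by
  unfold broomSeq
  by_cases hA : 1 ≤ i ∧ i ≤ q
  · rw [if_pos hA, if_pos (by omega)]
  · rw [if_neg hA]
    by_cases hB : q + 1 ≤ i ∧ i ≤ q + 1 + 1
    · rw [if_pos hB, if_pos (by omega)]
      have h : i - q - 1 = 0 ∨ i - q - 1 = 1 := by omega
      rcases h with h | h <;> rw [h] <;> simp
    · rw [if_neg hB, if_neg (by omega)]

private lemma choose_succ_le_of_half_le {m j : ℕ} (h : m / 2 ≤ j) :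
    Nat.choose m (j + 1) ≤ Nat.choose m j := by
  rcases lt_or_ge j m with hj | hj
  · rcases eq_or_ne (m - (j + 1)) j with he | hne
    · rw [← Nat.choose_symm (by omega : j + 1 ≤ m), he]
    · rw [← Nat.choose_symm (by omega : j + 1 ≤ m), ← Nat.choose_symm hj.le]
      have hlt : m - (j + 1) < m / 2 := by omega
      have := Nat.choose_le_succ_of_lt_half_left hlt
      have heq : m - (j + 1) + 1 = m - j := by omega
      rwa [heq] at this
  · rw [Nat.choose_eq_zero_of_lt (by omega)]
    exact Nat.zero_le _

private lemma step_up (m p : ℕ) (hp : 1 ≤ p) (a : ℕ) (ha : a < p + 1 + m / 2) :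
    broomSeq m p a ≤ broomSeq m p (a + 1) := by
  have hm2 : m / 2 ≤ m := Nat.div_le_self m 2
  rcases Nat.eq_zero_or_pos a with rfl | ha1
  · rw [broom_zero]; exact Nat.zero_le _
  rcases le_or_gt (a + 1) p with h | h
  · rw [broom_ones ha1 (by omega), broom_ones (by omega) h]
  rcases le_or_gt a p with h2 | h2
  · rw [broom_ones ha1 h2, broom_choose (by omega) (by omega)]
    have he : a + 1 - p - 1 = 0 := by omega
    rw [he, Nat.choose_zero_right]
  · rw [broom_choose (by omega) (by omega), broom_choose (by omega) (by omega)]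
    have he : a + 1 - p - 1 = (a - p - 1) + 1 := by omega
    rw [he]
    exact Nat.choose_le_succ_of_lt_half_left (by omega)

private lemma step_down (m p : ℕ) (a : ℕ) (ha : p + 1 + m / 2 ≤ a) :
    broomSeq m p (a + 1) ≤ broomSeq m p a := by
  have hm2 : m / 2 ≤ m := Nat.div_le_self m 2
  rcases le_or_gt (a + 1) (p + m + 1) with h | h
  · rw [broom_choose (by omega) h, broom_choose (by omega) (by omega)]
    have he : a + 1 - p - 1 = (a - p - 1) + 1 := by omega
    rw [he]
    exact choose_succ_le_of_half_le (by omega)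
  · rw [broom_big h]
    exact Nat.zero_le _

private lemma mono_of_step (f : ℕ → ℕ) (K : ℕ) (h : ∀ a, a < K → f a ≤ f (a + 1)) :
    ∀ a b, a ≤ b → b ≤ K → f a ≤ f b := by
  intro a b hab hbK
  induction b with
  | zero =>
    have ha0 : a = 0 := by omega
    rw [ha0]
  | succ n ih =>
    rcases Nat.eq_or_lt_of_le hab with he | hlt
    · rw [he]
    · exact le_trans (ih (by omega) (by omega)) (h n (by omega))

private lemma anti_of_step (f : ℕ → ℕ) (K : ℕ) (h : ∀ a, K ≤ a → f (a + 1) ≤ f a) :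
    ∀ a b, K ≤ a → a ≤ b → f b ≤ f a := by
  intro a b hKa hab
  induction b with
  | zero =>
    have : a = 0 := by omega
    rw [this]
  | succ n ih =>
    rcases Nat.eq_or_lt_of_le hab with he | hlt
    · rw [← he]
    · exact le_trans (h n (by omega)) (ih (by omega))

/-- The window-sum form of the convolution when `n = 1`. -/
private lemma conv_eq_window (m p q : ℕ) (i : ℕ) :
    convSeq m 1 p q i = ∑ j ∈ Finset.Icc (i - (q + 1)) i, broomSeq m p j := by
  unfold convSeq
  have h1 : ∀ j ∈ Finset.Icc 1 i,
      broomSeq m p j * broomSeq 1 q (i + 1 - j)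
        = if i - (q + 1) ≤ j then broomSeq m p j else 0 := by
    intro j hj
    rw [Finset.mem_Icc] at hj
    rw [broom_one_eq]
    split_ifs with h h2 h3 <;> omega
  rw [Finset.sum_congr rfl h1, Finset.sum_ite, Finset.sum_const_zero, add_zero]
  have h2 : Finset.filter (fun j => i - (q + 1) ≤ j) (Finset.Icc 1 i)
      = Finset.Icc (max (i - (q + 1)) 1) i := by
    ext j
    simp [Finset.mem_filter, Finset.mem_Icc]
    omega
  rw [h2]
  apply Finset.sum_subset
  · intro j hj
    rw [Finset.mem_Icc] at *
    omega
  · intro j hj hj2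
    rw [Finset.mem_Icc] at *
    have : j = 0 := by omega
    rw [this, broom_zero]

/-- Exchange identity for window sums. -/
private lemma window_step (s : ℕ → ℕ) (hs0 : s 0 = 0) (w i : ℕ) :
    (∑ j ∈ Finset.Icc (i + 1 - w) (i + 1), s j) + s (i - w)
      = (∑ j ∈ Finset.Icc (i - w) i, s j) + s (i + 1) := by
  have htop : ∑ j ∈ Finset.Icc (i + 1 - w) (i + 1), s j
      = (∑ j ∈ Finset.Icc (i + 1 - w) i, s j) + s (i + 1) := by
    rw [← Finset.insert_Icc_right_eq_Icc_add_one (by omega), Finset.sum_insert (by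
      rw [Finset.mem_Icc]; omega)]
    ring
  rw [htop]
  rcases le_or_gt w i with hw | hw
  · have hlow : i + 1 - w = (i - w) + 1 := by omega
    have hbot : ∑ j ∈ Finset.Icc (i - w) i, s j
        = s (i - w) + ∑ j ∈ Finset.Icc ((i - w) + 1) i, s j := by
      rw [← Finset.insert_Icc_add_one_left_eq_Icc (by omega), Finset.sum_insert (by
        rw [Finset.mem_Icc]; omega)]
    rw [hlow, hbot]
    ring
  · have h1 : i + 1 - w = 0 := by omega
    have h2 : i - w = 0 := by omega
    rw [h1, h2, hs0]
    ring

theorem convSeq_unimodal_of_n_eq_one (m p q : ℕ)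
    (hm : 1 ≤ m) (hp : 1 ≤ p) (hq : 1 ≤ q) :
    Unimodal (convSeq m 1 p q) := by
  set s := broomSeq m p with hs
  set K := p + 1 + m / 2 with hK
  set w := q + 1 with hw
  set T : ℕ → ℕ := fun i => ∑ j ∈ Finset.Icc (i - w) i, s j with hT
  have hconv : ∀ i, convSeq m 1 p q i = T i := fun i => conv_eq_window m p q i
  have hstep : ∀ i, T (i + 1) + s (i - w) = T i + s (i + 1) := fun i =>
    window_step s (broom_zero m p) w i
  have hup : ∀ a, a < K → s a ≤ s (a + 1) := step_up m p hp
  have hdown : ∀ a, K ≤ a → s (a + 1) ≤ s a := step_down m p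
  have hmono := mono_of_step s K hup
  have hanti := anti_of_step s K hdown
  -- T is nondecreasing whenever s (i - w) ≤ s (i + 1), etc.
  have hTle : ∀ i, s (i - w) ≤ s (i + 1) → T i ≤ T (i + 1) := by
    intro i h
    have := hstep i
    omega
  have hTge : ∀ i, s (i + 1) ≤ s (i - w) → T (i + 1) ≤ T i := by
    intro i h
    have := hstep i
    omega
  -- T is eventually zero
  have hTzero : ∀ i, p + m + 1 + w < i → T i = 0 := by
    intro i hi
    apply Finset.sum_eq_zero
    intro j hj
    rw [Finset.mem_Icc] at hj
    exact broom_big (by omega)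
  simp only [funext hconv]
  classical
  by_cases hex : ∃ i, 1 ≤ i ∧ T (i + 1) < T i
  · obtain ⟨hk1, hkdec⟩ := Nat.find_spec hex
    set k := Nat.find hex with hkdef
    have hkmin : ∀ j, j < k → ¬(1 ≤ j ∧ T (j + 1) < T j) := fun j hj => Nat.find_min hex hj
    -- s (k+1) < s (k - w), hence k + 1 > K
    have hks : s (k + 1) < s (k - w) := by
      have := hstep k
      omega
    have hkK : K < k + 1 := by
      by_contra hc
      push_neg at hc
      exact absurd (hmono (k - w) (k + 1) (by omega) hc) (by omega)
    refine ⟨k, hk1, ?_, ?_⟩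
    · intro i hi1 hik
      have hno : ¬(1 ≤ i ∧ T (i + 1) < T i) := hkmin i hik
      omega
    · intro i hki
      apply hTge
      rcases le_or_gt (i - w) K with hc | hc
      · calc s (i + 1) ≤ s (k + 1) := hanti (k + 1) (i + 1) (by omega) (by omega)
          _ ≤ s (k - w) := le_of_lt hks
          _ ≤ s (i - w) := hmono (k - w) (i - w) (by omega) hc
      · exact hanti (i - w) (i + 1) (by omega) (by omega)
  · -- T never strictly decreases from index ≥ 1; then T is 0 on [1, ∞)
    push_neg at hex
    have hmonoT : ∀ i, 1 ≤ i → T i ≤ T (i + 1) := by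
      intro i hi
      exact hex i hi
    have hmonoT' : ∀ i j, 1 ≤ i → i ≤ j → T i ≤ T j := by
      intro i j hi hij
      induction j with
      | zero =>
        have hi0 : i = 0 := by omega
        rw [hi0]
      | succ n ih =>
        rcases Nat.eq_or_lt_of_le hij with he | hlt
        · rw [he]
        · exact le_trans (ih (by omega)) (hmonoT n (by omega))
    have hallzero : ∀ i, 1 ≤ i → T i = 0 := by
      intro i hi
      have h1 : T i ≤ T (p + m + 2 + w + i) := hmonoT' i _ hi (by omega)
      have h2 : T (p + m + 2 + w + i) = 0 := hTzero _ (by omega)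
      omega
    refine ⟨1, le_refl 1, ?_, ?_⟩
    · intro i hi1 hik
      omega
    · intro i hi
      rw [hallzero i hi, hallzero (i + 1) (by omega)]
end
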